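/- arXiv:1608.03134 — 2 statements merged into one kernel-verified Lean document; each statement's English description precedes it below -/
import Mathlib

section
/- Let a > 0 be real, let p, b, c, λ, μ be complex numbers, and let y > 0 be real, with 0 < Re(μ) < Re(λ + p + 1). Then ∫₀^∞ x^{μ-1} (x + a + √(x² + 2ax))^{-λ} · H_{p,b,c}( y / (x + a + √(x² + 2ax)) ) dx = 2^{-μ-p} a^{μ-λ-p-1} y^{p+1} Γ(2μ) · Σ_{k=0}^∞ [ Γ(λ+p+2+2k) Γ(λ-μ+p+1+2k) / ( Γ(k + 3/2) Γ(k + p + (b+2)/2) Γ(λ+p+1+2k) Γ(λ+μ+p+2+2k) ) ] · ( -c y² / (4a²) )^k, where Γ denotes the complex Gamma function and all complex powers of positive reals are principal powers. -/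
open MeasureTheory

/-- The generalized Struve function of Orhan and Yagmur
`H_{p,b,c}(z) = ∑ₖ (-c)^k / (Γ(k + 3/2) Γ(k + p + (b+2)/2)) (z/2)^(2k+p+1)`. -/
noncomputable def struveH (p b c : ℂ) (z : ℂ) : ℂ :=
  ∑' k : ℕ, (-c) ^ k /
      (Complex.Gamma ((k : ℂ) + 3 / 2) * Complex.Gamma ((k : ℂ) + p + (b + 2) / 2)) *
    (z / 2) ^ (2 * (k : ℂ) + p + 1)

namespace Ober
open Set


/-- the substitution map -/
noncomputable def psi (a s : ℝ) : ℝ := a * (1 - s)^2 / (2 * s)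

lemma psi_pos {a s : ℝ} (ha : 0 < a) (hs : s ∈ Ioo (0:ℝ) 1) : 0 < psi a s := by
  obtain ⟨h0, h1⟩ := hs
  have : 0 < 1 - s := by linarith
  unfold psi; positivity

lemma sqrt_eval {a s : ℝ} (ha : 0 < a) (hs : s ∈ Ioo (0:ℝ) 1) :
    Real.sqrt ((psi a s)^2 + 2*a*(psi a s)) = a * (1-s) * (1+s) / (2*s) := by
  obtain ⟨h0, h1⟩ := hs
  have h1s : 0 < 1 - s := by linarith
  rw [show (psi a s)^2 + 2*a*(psi a s) = (a * (1-s) * (1+s) / (2*s))^2 by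
    unfold psi; field_simp; ring]
  exact Real.sqrt_sq (by positivity)

lemma u_eval {a s : ℝ} (ha : 0 < a) (hs : s ∈ Ioo (0:ℝ) 1) :
    psi a s + a + Real.sqrt ((psi a s)^2 + 2*a*(psi a s)) = a / s := by
  rw [sqrt_eval ha hs]
  obtain ⟨h0, h1⟩ := hs
  unfold psi; field_simp; ring

lemma u_pos {a x : ℝ} (ha : 0 < a) (hx : 0 ≤ x) :
    0 < x + a + Real.sqrt (x^2 + 2*a*x) := by
  have := Real.sqrt_nonneg (x^2 + 2*a*x); linarith

lemma psi_surj {a x : ℝ} (ha : 0 < a) (hx : 0 < x) :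
    ∃ s ∈ Ioo (0:ℝ) 1, psi a s = x := by
  set r := Real.sqrt (x^2 + 2*a*x) with hr
  have hr2 : r^2 = x^2 + 2*a*x := Real.sq_sqrt (by positivity)
  have hrpos : 0 < r := by
    rw [hr]; apply Real.sqrt_pos.2; positivity
  set u := x + a + r with hu
  have hupos : 0 < u := by positivity
  have hua : a < u := by nlinarith [Real.sqrt_nonneg (x^2+2*a*x)]
  refine ⟨a / u, ⟨by positivity, (div_lt_one hupos).2 hua⟩, ?_⟩
  unfold psi
  have h2 : (u - a)^2 = 2 * x * u := by
    have : u - a = x + r := by rw [hu]; ring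
    rw [this]; nlinarith
  rw [div_eq_iff (by positivity)]
  have huane : u ≠ 0 := ne_of_gt hupos
  field_simp
  rw [h2]; ring

lemma psi_image {a : ℝ} (ha : 0 < a) : psi a '' Ioo 0 1 = Ioi 0 := by
  ext x
  simp only [mem_image, mem_Ioi]
  constructor
  · rintro ⟨s, hs, rfl⟩; exact psi_pos ha hs
  · intro hx; obtain ⟨s, hs, h⟩ := psi_surj ha hx; exact ⟨s, hs, h⟩

lemma psi_hasDeriv {a s : ℝ} (hs : s ≠ 0) :
    HasDerivAt (psi a) (-(a * (1-s) * (1+s)) / (2*s^2)) s := by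
  have h1 : HasDerivAt (fun s : ℝ => a * (1 - s)^2) (a * (2 * (1-s) * (-1))) s := by
    have := ((hasDerivAt_id s).const_sub 1).pow 2
    simpa using (this.const_mul a)
  have h2 : HasDerivAt (fun s : ℝ => 2 * s) 2 s := by
    simpa using (hasDerivAt_id s).const_mul 2
  have := h1.div h2 (by simpa using hs)
  refine HasDerivAt.congr_deriv this ?_
  field_simp; ring

lemma psi_inj {a : ℝ} (ha : 0 < a) : InjOn (psi a) (Ioo 0 1) := by
  intro s hs t ht h
  have h1 := u_eval ha hs
  have h2 := u_eval ha ht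
  rw [h] at h1
  have hst : a / s = a / t := h1.symm.trans h2
  have hs0 : s ≠ 0 := ne_of_gt hs.1
  have ht0 : t ≠ 0 := ne_of_gt ht.1
  field_simp at hst
  exact hst.symm

lemma cpow_pos_eq {r : ℝ} (hr : 0 < r) (w : ℂ) :
    (r:ℂ) ^ w = Complex.exp (w * (Real.log r : ℂ)) := by
  rw [Complex.cpow_def_of_ne_zero (by exact_mod_cast hr.ne'),
    ← Complex.ofReal_log hr.le, mul_comm]

lemma ofReal_pos_eq {r : ℝ} (hr : 0 < r) :
    (r:ℂ) = Complex.exp ((Real.log r : ℂ)) := by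
  rw [← Complex.ofReal_exp, Real.exp_log hr]

lemma transform {a : ℝ} (ha : 0 < a) (μ lam : ℂ) {s : ℝ} (hs : s ∈ Ioo (0:ℝ) 1) :
    |(-(a * (1-s) * (1+s)) / (2*s^2))| •
      (((psi a s : ℝ):ℂ)^(μ-1) * ((a / s : ℝ):ℂ)^(-lam))
    = (2:ℂ)^(-μ) * (a:ℂ)^(μ-lam) * ((s:ℂ)^((lam-μ)-1) * (1-(s:ℂ))^(2*μ-1))
      + (2:ℂ)^(-μ) * (a:ℂ)^(μ-lam) * ((s:ℂ)^((lam-μ+1)-1) * (1-(s:ℂ))^(2*μ-1)) := by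
  obtain ⟨h0, h1⟩ := hs
  have h1s : 0 < 1 - s := by linarith
  have h1p : 0 < 1 + s := by linarith
  have hpsi : 0 < psi a s := by unfold psi; positivity
  have habs : |(-(a * (1-s) * (1+s)) / (2*s^2))| = a * (1-s) * (1+s) / (2*s^2) := by
    rw [abs_div, abs_neg, abs_of_pos (by positivity), abs_of_pos (by positivity)]
  rw [habs, Complex.real_smul]
  -- log expansions
  have hlpsi : Real.log (psi a s) =
      Real.log a + 2 * Real.log (1-s) - (Real.log 2 + Real.log s) := by
    unfold psi
    rw [Real.log_div (by positivity) (by positivity), Real.log_mul ha.ne' (by positivity),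
      Real.log_mul (by norm_num) h0.ne', Real.log_pow]
    push_cast; ring
  have hldiv : Real.log (a / s) = Real.log a - Real.log s :=
    Real.log_div ha.ne' h0.ne'
  have hlmul : Real.log (a * (1-s) * (1+s) / (2*s^2)) =
      Real.log a + Real.log (1-s) + Real.log (1+s) - (Real.log 2 + 2 * Real.log s) := by
    rw [Real.log_div (by positivity) (by positivity), Real.log_mul (by positivity) h1p.ne',
      Real.log_mul ha.ne' h1s.ne', Real.log_mul (by norm_num) (by positivity), Real.log_pow]
    push_cast; ring
  have e1 : ((a * (1-s) * (1+s) / (2*s^2) : ℝ):ℂ) =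
      Complex.exp ((Real.log a + Real.log (1-s) + Real.log (1+s)
        - (Real.log 2 + 2 * Real.log s) : ℝ)) := by
    rw [ofReal_pos_eq (by positivity), hlmul]
  have e2 : ((psi a s : ℝ):ℂ)^(μ-1) =
      Complex.exp ((μ-1) * ((Real.log a + 2 * Real.log (1-s)
        - (Real.log 2 + Real.log s) : ℝ) : ℂ)) := by
    rw [cpow_pos_eq hpsi, hlpsi]
  have e3 : ((a / s : ℝ):ℂ)^(-lam) =
      Complex.exp ((-lam) * ((Real.log a - Real.log s : ℝ) : ℂ)) := by
    rw [cpow_pos_eq (by positivity), hldiv]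
  have e4 : (2:ℂ)^(-μ) = Complex.exp ((-μ) * ((Real.log 2 : ℝ) : ℂ)) := by
    rw [show (2:ℂ) = ((2:ℝ):ℂ) by norm_num, cpow_pos_eq (by norm_num)]
  have e5 : (a:ℂ)^(μ-lam) = Complex.exp ((μ-lam) * ((Real.log a : ℝ) : ℂ)) := by
    rw [cpow_pos_eq ha]
  have e6 : ∀ w : ℂ, (s:ℂ)^w = Complex.exp (w * ((Real.log s : ℝ) : ℂ)) :=
    fun w => cpow_pos_eq h0 w
  have e7 : (1-(s:ℂ))^(2*μ-1) =
      Complex.exp ((2*μ-1) * ((Real.log (1-s) : ℝ) : ℂ)) := by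
    rw [show (1-(s:ℂ)) = ((1-s:ℝ):ℂ) by push_cast; ring, cpow_pos_eq h1s]
  have hsplit : ((s:ℂ))^((lam-μ+1)-1) = (s:ℂ)^((lam-μ)-1) * (s:ℂ) := by
    rw [show (lam-μ+1)-1 = ((lam-μ)-1)+1 by ring,
      Complex.cpow_add _ _ (by exact_mod_cast h0.ne'), Complex.cpow_one]
  rw [hsplit]
  rw [show ∀ (K S T : ℂ), K * (S * T) + K * (S * (s:ℂ) * T) = K * (S * T) * ((1+s:ℝ):ℂ) by
    intro K S T; push_cast; ring]
  rw [e1, e2, e3, e4, e5, e6, e7, ofReal_pos_eq h1p]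
  simp only [← Complex.exp_add]
  congr 1
  push_cast
  ring


lemma lemA (a : ℝ) (ha : 0 < a) (μ lam : ℂ) (h1 : 0 < μ.re) (h2 : μ.re < lam.re) :
    ∫ x in Ioi (0:ℝ), (x:ℂ)^(μ-1) * ((x + a + Real.sqrt (x^2+2*a*x) : ℝ):ℂ)^(-lam)
    = 2^(1-μ) * lam * (a:ℂ)^(μ-lam) * Complex.Gamma (2*μ) * Complex.Gamma (lam-μ)
        / Complex.Gamma (lam+μ+1) := by
  have h2μ : 0 < (2*μ).re := by simp [Complex.mul_re]; nlinarith [h1]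
  have hlmμ : 0 < (lam-μ).re := by simp [Complex.sub_re]; linarith [h2]
  have hlmμ1 : 0 < (lam-μ+1).re := by simp [Complex.add_re, Complex.sub_re]; linarith [h2]
  rw [← psi_image ha, integral_image_eq_integral_abs_deriv_smul measurableSet_Ioo
    (fun s hs => (psi_hasDeriv (ne_of_gt hs.1)).hasDerivWithinAt) (psi_inj ha)]
  rw [setIntegral_congr_fun measurableSet_Ioo (g := fun s : ℝ =>
      (2:ℂ)^(-μ) * (a:ℂ)^(μ-lam) * ((s:ℂ)^((lam-μ)-1) * (1-(s:ℂ))^(2*μ-1))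
      + (2:ℂ)^(-μ) * (a:ℂ)^(μ-lam) * ((s:ℂ)^((lam-μ+1)-1) * (1-(s:ℂ))^(2*μ-1)))
    (fun s hs => by
      have := transform ha μ lam hs
      rw [u_eval ha hs]
      exact this)]
  have hint1 : IntegrableOn (fun s : ℝ => (s:ℂ)^((lam-μ)-1) * (1-(s:ℂ))^(2*μ-1)) (Ioo 0 1) := by
    exact ((Complex.betaIntegral_convergent hlmμ h2μ).1.mono_set Ioo_subset_Ioc_self)
  have hint2 : IntegrableOn (fun s : ℝ => (s:ℂ)^((lam-μ+1)-1) * (1-(s:ℂ))^(2*μ-1)) (Ioo 0 1) := by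
    exact ((Complex.betaIntegral_convergent hlmμ1 h2μ).1.mono_set Ioo_subset_Ioc_self)
  rw [integral_add ((hint1.const_mul _)) ((hint2.const_mul _)),
    integral_const_mul, integral_const_mul]
  have hbeta : ∀ u : ℂ, 0 < u.re →
      ∫ s in Ioo (0:ℝ) 1, (s:ℂ)^(u-1) * (1-(s:ℂ))^(2*μ-1)
        = Complex.Gamma u * Complex.Gamma (2*μ) / Complex.Gamma (u + 2*μ) := by
    intro u hu
    have hb := Complex.Gamma_mul_Gamma_eq_betaIntegral hu h2μ
    have hG : Complex.Gamma (u + 2*μ) ≠ 0 :=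
      Complex.Gamma_ne_zero_of_re_pos (by simp [Complex.add_re]; linarith)
    have : Complex.betaIntegral u (2*μ) = ∫ s in Ioo (0:ℝ) 1, (s:ℂ)^(u-1) * (1-(s:ℂ))^(2*μ-1) := by
      rw [Complex.betaIntegral, intervalIntegral.integral_of_le (by norm_num),
        integral_Ioc_eq_integral_Ioo]
    rw [← this, eq_div_iff hG, mul_comm (Complex.betaIntegral u (2*μ)) _, ← hb]
  rw [hbeta _ hlmμ, hbeta _ hlmμ1]
  have key1 : Complex.Gamma (lam-μ+1) = (lam-μ) * Complex.Gamma (lam-μ) :=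
    Complex.Gamma_add_one _ (by intro h; rw [h] at hlmμ; simp at hlmμ)
  have key2 : Complex.Gamma (lam+μ+1) = (lam+μ) * Complex.Gamma (lam+μ) := by
    have : lam + μ ≠ 0 := by
      intro h
      have : (lam+μ).re = 0 := by rw [h]; simp
      simp [Complex.add_re] at this; nlinarith [h1, h2]
    exact Complex.Gamma_add_one _ this
  have hGlm : Complex.Gamma (lam+μ) ≠ 0 :=
    Complex.Gamma_ne_zero_of_re_pos (by simp [Complex.add_re]; nlinarith [h1, h2])
  have hGl1 : Complex.Gamma (lam+μ+1) ≠ 0 :=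
    Complex.Gamma_ne_zero_of_re_pos (by simp [Complex.add_re]; nlinarith [h1, h2])
  have h2pow : (2:ℂ)^(1-μ) = 2 * (2:ℂ)^(-μ) := by
    rw [show (1:ℂ)-μ = 1 + (-μ) by ring, Complex.cpow_add _ _ (by norm_num), Complex.cpow_one]
  rw [show lam - μ + 2*μ = lam + μ by ring, show lam - μ + 1 + 2*μ = lam + μ + 1 by ring,
    key1, key2, h2pow]
  rw [key2] at hGl1
  have hlm0 : lam + μ ≠ 0 := left_ne_zero_of_mul hGl1
  field_simp
  ring


lemma ne_zero_of_re_pos {z : ℂ} (h : 0 < z.re) : z ≠ 0 := fun hz => by simp [hz] at h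

lemma U_ge_a {a x : ℝ} (hx : 0 ≤ x) : a ≤ x + a + Real.sqrt (x^2+2*a*x) := by
  have := Real.sqrt_nonneg (x^2+2*a*x); linarith

lemma U_ge_x {a x : ℝ} (ha : 0 < a) : x ≤ x + a + Real.sqrt (x^2+2*a*x) := by
  have := Real.sqrt_nonneg (x^2+2*a*x); linarith

lemma rpow_neg_anti {v u L : ℝ} (hv : 0 < v) (hvu : v ≤ u) (hL : 0 ≤ L) :
    u^(-L) ≤ v^(-L) := by
  rw [Real.rpow_neg (by linarith), Real.rpow_neg hv.le]
  exact inv_anti₀ (Real.rpow_pos_of_pos hv L) (Real.rpow_le_rpow hv.le hvu hL)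

lemma intF {a : ℝ} (ha : 0 < a) {m L : ℝ} (hm : 0 < m) (hL : m < L) :
    IntegrableOn (fun x : ℝ => x^(m-1) * (x + a + Real.sqrt (x^2+2*a*x))^(-L)) (Ioi 0) := by
  have hU : ∀ x : ℝ, 0 < x → 0 < x + a + Real.sqrt (x^2+2*a*x) := fun x hx => u_pos ha hx.le
  have hcont : ContinuousOn (fun x : ℝ => x^(m-1) * (x + a + Real.sqrt (x^2+2*a*x))^(-L)) (Ioi 0) := by
    apply ContinuousOn.mul
    · exact fun x hx => (Real.continuousAt_rpow_const x (m-1) (Or.inl (ne_of_gt hx))).continuousWithinAt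
    · apply ContinuousOn.rpow_const
      · fun_prop
      · exact fun x hx => Or.inl (ne_of_gt (hU x hx))
  rw [show Ioi (0:ℝ) = Ioc 0 1 ∪ Ioi 1 from (Ioc_union_Ioi_eq_Ioi zero_le_one).symm]
  apply IntegrableOn.union
  · apply Integrable.mono' (g := fun x : ℝ => a^(-L) * x^(m-1))
    · exact (((intervalIntegral.intervalIntegrable_rpow' (by linarith : (-1:ℝ) < m-1)).1).const_mul _)
    · exact (hcont.mono Ioc_subset_Ioi_self).aestronglyMeasurable measurableSet_Ioc
    · rw [ae_restrict_iff' measurableSet_Ioc]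
      refine ae_of_all _ (fun x hx => ?_)
      have hx0 : 0 < x := hx.1
      have hu0 : 0 < x + a + Real.sqrt (x^2+2*a*x) := hU x hx0
      rw [norm_mul, Real.norm_rpow_of_nonneg hx0.le, Real.norm_rpow_of_nonneg hu0.le,
        Real.norm_eq_abs, Real.norm_eq_abs, abs_of_pos hx0, abs_of_pos hu0, mul_comm]
      exact mul_le_mul_of_nonneg_right (rpow_neg_anti ha (U_ge_a hx0.le) (by linarith))
        (Real.rpow_nonneg hx0.le _)
  · apply Integrable.mono' (g := fun x : ℝ => x^(m-1-L))
    · exact integrableOn_Ioi_rpow_of_lt (by linarith) zero_lt_one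
    · exact (hcont.mono (Ioi_subset_Ioi zero_le_one)).aestronglyMeasurable measurableSet_Ioi
    · rw [ae_restrict_iff' measurableSet_Ioi]
      refine ae_of_all _ (fun x hx => ?_)
      have hx0 : (0:ℝ) < x := lt_trans zero_lt_one hx
      have hu0 : 0 < x + a + Real.sqrt (x^2+2*a*x) := hU x hx0
      rw [norm_mul, Real.norm_rpow_of_nonneg hx0.le, Real.norm_rpow_of_nonneg hu0.le,
        Real.norm_eq_abs, Real.norm_eq_abs, abs_of_pos hx0, abs_of_pos hu0,
        show m-1-L = (m-1) + (-L) by ring, Real.rpow_add hx0]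
      exact mul_le_mul_of_nonneg_left (rpow_neg_anti hx0 (U_ge_x ha) (by linarith))
        (Real.rpow_nonneg hx0.le _)

set_option maxHeartbeats 1000000 in
lemma sum_ratio (q : ℝ) (hq : 0 ≤ q) (w : ℂ) :
    Summable (fun k : ℕ => q^k / (‖Complex.Gamma ((k:ℂ)+3/2)‖ * ‖Complex.Gamma ((k:ℂ)+w)‖)) := by
  have hhalf : (1:ℝ)/2 < 1 := by norm_num
  apply summable_of_ratio_norm_eventually_le hhalf
  have ta : Filter.Tendsto (fun k : ℕ => (k:ℝ)) Filter.atTop Filter.atTop :=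
    tendsto_natCast_atTop_atTop
  have tb : Filter.Tendsto (fun k : ℕ => (k:ℝ) + 3/2) Filter.atTop Filter.atTop :=
    Filter.tendsto_atTop_add_const_right _ _ ta
  have tc : Filter.Tendsto (fun k : ℕ => (k:ℝ) - ‖w‖) Filter.atTop Filter.atTop :=
    Filter.tendsto_atTop_add_const_right _ _ ta
  have td : Filter.Tendsto (fun k : ℕ => ((k:ℝ) + 3/2) * ((k:ℝ) - ‖w‖))
      Filter.atTop Filter.atTop := tb.atTop_mul_atTop₀ tc
  have t1 : Filter.Tendsto (fun k : ℕ => (1/2)*(((k:ℝ)+3/2)*((k:ℝ)-‖w‖)))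
      Filter.atTop Filter.atTop := td.const_mul_atTop (by norm_num)
  filter_upwards [t1.eventually_ge_atTop q,
    tendsto_natCast_atTop_atTop.eventually_ge_atTop (‖w‖+1)] with k hk1 hk2
  have hwre : |w.re| ≤ ‖w‖ := Complex.abs_re_le_norm w
  have hre1 : (0:ℝ) < (k:ℝ) + 3/2 := by positivity
  have hne1 : ((k:ℂ)+3/2) ≠ 0 := ne_zero_of_re_pos (by simp; positivity)
  have hne2 : ((k:ℂ)+w) ≠ 0 := ne_zero_of_re_pos (by simp; linarith [neg_abs_le w.re])
  have hG1 : Complex.Gamma ((k:ℂ)+3/2) ≠ 0 := Complex.Gamma_ne_zero_of_re_pos (by simp; positivity)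
  have hG2 : Complex.Gamma ((k:ℂ)+w) ≠ 0 := Complex.Gamma_ne_zero_of_re_pos (by
    simp; linarith [neg_abs_le w.re])
  have hg1 : (0:ℝ) < ‖Complex.Gamma ((k:ℂ)+3/2)‖ := norm_pos_iff.2 hG1
  have hg2 : (0:ℝ) < ‖Complex.Gamma ((k:ℂ)+w)‖ := norm_pos_iff.2 hG2
  have hn2 : (k:ℝ) - ‖w‖ ≤ ‖(k:ℂ)+w‖ := by
    have h := norm_sub_norm_le ((k:ℂ)) (-w)
    rw [sub_neg_eq_add, norm_neg, Complex.norm_natCast] at h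
    exact h
  have hn2pos : (0:ℝ) < ‖(k:ℂ)+w‖ := norm_pos_iff.2 hne2
  have hrec1 : Complex.Gamma (((k+1:ℕ):ℂ)+3/2) = ((k:ℂ)+3/2) * Complex.Gamma ((k:ℂ)+3/2) := by
    rw [show ((k+1:ℕ):ℂ)+3/2 = ((k:ℂ)+3/2)+1 by push_cast; ring, Complex.Gamma_add_one _ hne1]
  have hrec2 : Complex.Gamma (((k+1:ℕ):ℂ)+w) = ((k:ℂ)+w) * Complex.Gamma ((k:ℂ)+w) := by
    rw [show ((k+1:ℕ):ℂ)+w = ((k:ℂ)+w)+1 by push_cast; ring, Complex.Gamma_add_one _ hne2]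
  have hnorm1 : ‖((k:ℂ)+3/2)‖ = (k:ℝ)+3/2 := by
    rw [show ((k:ℂ)+3/2) = (((k:ℝ)+3/2 : ℝ):ℂ) by push_cast; ring, Complex.norm_real,
      Real.norm_eq_abs, abs_of_pos hre1]
  have key : q ≤ 1/2 * (((k:ℝ)+3/2) * ‖(k:ℂ)+w‖) := by
    refine le_trans hk1 ?_
    have h32 : (0:ℝ) ≤ (k:ℝ)+3/2 := hre1.le
    nlinarith [hn2]
  rw [Real.norm_eq_abs, Real.norm_eq_abs, abs_of_nonneg (by positivity),
    abs_of_nonneg (by positivity), hrec1, hrec2, norm_mul, norm_mul, hnorm1]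
  set g1 := ‖Complex.Gamma ((k:ℂ)+3/2)‖ with hg1d
  set g2 := ‖Complex.Gamma ((k:ℂ)+w)‖ with hg2d
  set n2 := ‖(k:ℂ)+w‖ with hn2d
  have hsplit : q^(k+1) / ((((k:ℝ)+3/2) * g1) * (n2 * g2))
      = (q / (((k:ℝ)+3/2) * n2)) * (q^k / (g1*g2)) := by
    field_simp
    ring
  rw [hsplit]
  have hfrac : q / (((k:ℝ)+3/2) * n2) ≤ 1/2 := by
    rw [div_le_iff₀ (mul_pos hre1 hn2pos)]
    linarith [key]
  exact mul_le_mul_of_nonneg_right hfrac (div_nonneg (pow_nonneg hq k) (by positivity))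


lemma norm_bound (a y : ℝ) (ha : 0 < a) (hy : 0 < y) (p lam b c μ : ℂ) (k : ℕ) {x : ℝ}
    (hx : 0 < x) :
    ‖(x:ℂ)^(μ-1) * ((x + a + Real.sqrt (x^2+2*a*x) : ℝ):ℂ)^(-lam) *
      ((-c)^k / (Complex.Gamma ((k:ℂ)+3/2) * Complex.Gamma ((k:ℂ)+p+(b+2)/2)) *
        (((y:ℂ) / ((x + a + Real.sqrt (x^2+2*a*x) : ℝ):ℂ)) / 2)^(2*(k:ℂ)+p+1))‖
    ≤ ((y/2)^(p.re+1) *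
        ((‖c‖*((y/2)^2/a^2))^k /
          (‖Complex.Gamma ((k:ℂ)+3/2)‖ * ‖Complex.Gamma ((k:ℂ)+p+(b+2)/2)‖)))
      * (x^(μ.re-1) * (x + a + Real.sqrt (x^2+2*a*x))^(-((lam+p+1).re))) := by
  set u := x + a + Real.sqrt (x^2+2*a*x) with hudef
  have hu0 : 0 < u := u_pos ha hx.le
  have hau : a ≤ u := U_ge_a hx.le
  clear_value u
  have hy2 : (0:ℝ) < y/2 := by linarith
  have hyu2 : (0:ℝ) < y/u/2 := div_pos (div_pos hy hu0) (by norm_num)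
  have h1 : ‖(x:ℂ)^(μ-1)‖ = x^(μ.re-1) := by
    rw [Complex.norm_cpow_eq_rpow_re_of_pos hx]
    norm_num
  have h2 : ‖((u:ℝ):ℂ)^(-lam)‖ = u^(-lam.re) := by
    rw [Complex.norm_cpow_eq_rpow_re_of_pos hu0]
    norm_num
  have h3 : ‖(((y:ℂ) / ((u:ℝ):ℂ)) / 2)^(2*(k:ℂ)+p+1)‖ = (y/u/2)^(2*(k:ℝ)+p.re+1) := by
    rw [show ((y:ℂ) / ((u:ℝ):ℂ)) / 2 = ((y/u/2 : ℝ):ℂ) by push_cast; ring,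
      Complex.norm_cpow_eq_rpow_re_of_pos hyu2]
    norm_num [Complex.add_re, Complex.mul_re]
  have h4 : ‖(-c)^k / (Complex.Gamma ((k:ℂ)+3/2) * Complex.Gamma ((k:ℂ)+p+(b+2)/2))‖
      = ‖c‖^k / (‖Complex.Gamma ((k:ℂ)+3/2)‖ * ‖Complex.Gamma ((k:ℂ)+p+(b+2)/2)‖) := by
    rw [norm_div, norm_pow, norm_neg, norm_mul]
  rw [norm_mul, norm_mul, norm_mul, h1, h2, h3, h4]
  have E : ∀ {r : ℝ}, 0 < r → ∀ t : ℝ, r^t = Real.exp (t * Real.log r) := by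
    intro r hr t; rw [Real.rpow_def_of_pos hr, mul_comm]
  have EP : ∀ {r : ℝ}, 0 < r → ∀ n : ℕ, r^n = Real.exp ((n:ℝ) * Real.log r) := by
    intro r hr n; rw [← Real.rpow_natCast, E hr]
  set g1 := ‖Complex.Gamma ((k:ℂ)+3/2)‖
  set g2 := ‖Complex.Gamma ((k:ℂ)+p+(b+2)/2)‖
  have hlw : Real.log (y/u/2) = Real.log (y/2) - Real.log u := by
    rw [show y/u/2 = (y/2)/u by ring, Real.log_div (by positivity) hu0.ne']
  have hlogqa : Real.log ((y/2)^2/a^2) = 2*Real.log (y/2) - 2*Real.log a := by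
    rw [Real.log_div (by positivity) (by positivity), Real.log_pow, Real.log_pow]
    push_cast; ring
  have hLre : (lam+p+1).re = lam.re + (p.re + 1) := by simp [Complex.add_re]; ring
  set T1 := (p.re+1)*Real.log (y/2) + 2*(k:ℝ)*Real.log (y/2) + (μ.re-1)*Real.log x
    - (lam+p+1).re*Real.log u with hT1
  have mg1 : ∀ (Kc A B Cc : ℝ),
      Real.exp A * Real.exp B * (Kc * Real.exp Cc) = Kc * Real.exp (A+B+Cc) := by
    intros; rw [Real.exp_add, Real.exp_add]; ring
  have mg2 : ∀ (P G A B Cc D : ℝ),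
      Real.exp A * (P * Real.exp B / G) * (Real.exp Cc * Real.exp D)
        = (P/G) * Real.exp (A+B+Cc+D) := by
    intros; rw [Real.exp_add, Real.exp_add, Real.exp_add]; ring
  have step1 : x^(μ.re-1) * u^(-lam.re) * (‖c‖^k/(g1*g2) * (y/u/2)^(2*(k:ℝ)+p.re+1))
      = (‖c‖^k/(g1*g2)) * Real.exp (T1 - 2*(k:ℝ)*Real.log u) := by
    rw [E hx, E hu0, E hyu2, mg1]
    congr 1
    rw [hlw, hT1, hLre]; ring
  have step2 : ((y/2)^(p.re+1) * ((‖c‖*((y/2)^2/a^2))^k / (g1*g2)))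
        * (x^(μ.re-1) * u^(-((lam+p+1).re)))
      = (‖c‖^k/(g1*g2)) * Real.exp (T1 - 2*(k:ℝ)*Real.log a) := by
    rw [mul_pow, EP (by positivity : (0:ℝ) < (y/2)^2/a^2), hlogqa,
      E hy2, E hx, E hu0, mg2]
    congr 1
    rw [hT1]; ring
  rw [step1, step2]
  have hlog : Real.log a ≤ Real.log u := Real.log_le_log ha hau
  have hKnn : (0:ℝ) ≤ ‖c‖^k/(g1*g2) :=
    div_nonneg (pow_nonneg (norm_nonneg c) k) (mul_nonneg (norm_nonneg _) (norm_nonneg _))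
  refine mul_le_mul_of_nonneg_left (Real.exp_le_exp.2 ?_) hKnn
  have : 2*(k:ℝ)*Real.log a ≤ 2*(k:ℝ)*Real.log u := by
    apply mul_le_mul_of_nonneg_left hlog
    positivity
  linarith



lemma arg_pos_ne_pi {r : ℝ} (hr : 0 < r) : Complex.arg r ≠ Real.pi := by
  rw [Complex.arg_ofReal_of_nonneg hr.le]; exact Real.pi_ne_zero.symm

lemma term_eq {a y : ℝ} (ha : 0 < a) (hy : 0 < y) {p b c lam μ : ℂ}
    (h1 : 0 < μ.re) (h2 : μ.re < (lam + p + 1).re) (k : ℕ) :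
    ((-c)^k / (Complex.Gamma ((k:ℂ)+3/2) * Complex.Gamma ((k:ℂ)+p+(b+2)/2))
        * ((y/2 : ℝ):ℂ)^(2*(k:ℂ)+p+1)) *
      (2^(1-μ) * (lam+p+1+2*(k:ℂ)) * (a:ℂ)^(μ-(lam+p+1+2*(k:ℂ))) * Complex.Gamma (2*μ)
        * Complex.Gamma ((lam+p+1+2*(k:ℂ))-μ) / Complex.Gamma ((lam+p+1+2*(k:ℂ))+μ+1))
    = (2:ℂ)^(-μ-p) * (a:ℂ)^(μ-lam-p-1) * (y:ℂ)^(p+1) * Complex.Gamma (2*μ) *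
        (Complex.Gamma (lam + p + 2 + 2*(k:ℂ)) * Complex.Gamma (lam - μ + p + 1 + 2*(k:ℂ)) /
            (Complex.Gamma ((k:ℂ)+3/2) * Complex.Gamma ((k:ℂ)+p+(b+2)/2) *
              Complex.Gamma (lam + p + 1 + 2*(k:ℂ)) * Complex.Gamma (lam + μ + p + 2 + 2*(k:ℂ))) *
          (-c * (y:ℂ)^2 / (4*(a:ℂ)^2))^k) := by
  have haC : (a:ℂ) ≠ 0 := by exact_mod_cast ha.ne'
  set ly := (Real.log y : ℂ) with hly
  set l2 := (Real.log 2 : ℂ) with hl2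
  set la := (Real.log a : ℂ) with hla
  set G1 := Complex.Gamma ((k:ℂ)+3/2) with hG1d
  set G2 := Complex.Gamma ((k:ℂ)+p+(b+2)/2) with hG2d
  have hkre : ((2:ℂ)*(k:ℂ)).re = 2*(k:ℝ) := by
    rw [show (2:ℂ)*(k:ℂ) = ((2*k:ℕ):ℂ) by push_cast; ring, Complex.natCast_re]
    push_cast; ring
  have hlamre : 0 < ((lam+p+1+2*(k:ℂ))).re := by
    rw [Complex.add_re, hkre]
    have : (0:ℝ) ≤ 2*(k:ℝ) := by positivity
    linarith
  have hlamne : (lam+p+1+2*(k:ℂ)) ≠ 0 := ne_zero_of_re_pos hlamre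
  have hGlam : Complex.Gamma (lam+p+1+2*(k:ℂ)) ≠ 0 := Complex.Gamma_ne_zero_of_re_pos hlamre
  have hGY : Complex.Gamma ((lam+p+1+2*(k:ℂ))+μ+1) ≠ 0 := by
    apply Complex.Gamma_ne_zero_of_re_pos
    rw [Complex.add_re, Complex.add_re, Complex.one_re]
    linarith [hlamre, h1]
  have hrec : Complex.Gamma ((lam+p+1+2*(k:ℂ))+1)
      = (lam+p+1+2*(k:ℂ)) * Complex.Gamma (lam+p+1+2*(k:ℂ)) :=
    Complex.Gamma_add_one _ hlamne
  -- exp forms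
  have e1 : ((y/2 : ℝ):ℂ)^(2*(k:ℂ)+p+1)
      = Complex.exp ((2*(k:ℂ)+p+1) * (ly - l2)) := by
    rw [cpow_pos_eq (by positivity) _, Real.log_div hy.ne' (by norm_num), hly, hl2]
    push_cast; ring_nf
  have e2 : (2:ℂ)^(1-μ) = Complex.exp ((1-μ) * l2) := by
    rw [show (2:ℂ) = ((2:ℝ):ℂ) by norm_num, cpow_pos_eq (by norm_num)]
  have e3 : (a:ℂ)^(μ-(lam+p+1+2*(k:ℂ)))
      = Complex.exp ((μ-(lam+p+1+2*(k:ℂ))) * la) := cpow_pos_eq ha _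
  have e4 : (2:ℂ)^(-μ-p) = Complex.exp ((-μ-p) * l2) := by
    rw [show (2:ℂ) = ((2:ℝ):ℂ) by norm_num, cpow_pos_eq (by norm_num)]
  have e5 : (a:ℂ)^(μ-lam-p-1) = Complex.exp ((μ-lam-p-1) * la) := cpow_pos_eq ha _
  have e6 : (y:ℂ)^(p+1) = Complex.exp ((p+1) * ly) := cpow_pos_eq hy _
  have e7 : (-c * (y:ℂ)^2 / (4*(a:ℂ)^2))^k
      = (-c)^k * Complex.exp ((k:ℂ) * (2*ly - 2*l2 - 2*la)) := by
    have hb : -c * (y:ℂ)^2 / (4*(a:ℂ)^2) = -c * ((y^2/(4*a^2) : ℝ):ℂ) := by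
      push_cast; field_simp
    have hlr : Real.log (y^2/(4*a^2)) = 2*Real.log y - 2*Real.log 2 - 2*Real.log a := by
      rw [Real.log_div (by positivity) (by positivity), Real.log_mul (by norm_num)
        (by positivity), Real.log_pow, Real.log_pow,
        show (4:ℝ) = 2^2 by norm_num, Real.log_pow]
      push_cast; ring
    rw [hb, mul_pow, ofReal_pos_eq (by positivity : (0:ℝ) < y^2/(4*a^2)),
      ← Complex.exp_nat_mul, hlr]
    rw [hly, hl2, hla]
    push_cast
    ring_nf
  by_cases hG2 : G2 = 0
  · simp [hG2]
  have hG1 : G1 ≠ 0 := by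
    rw [hG1d]
    apply Complex.Gamma_ne_zero_of_re_pos
    rw [Complex.add_re, Complex.natCast_re]
    norm_num
    positivity
  set T := (2*(k:ℂ)+p+1)*ly + (-2*(k:ℂ)-p-μ)*l2 + (μ-lam-p-1-2*(k:ℂ))*la with hT
  have shapeL : ∀ (q g L Γ2 Γx ΓY P1 P2 P3 : ℂ), P1+P2+P3 = T →
      q/g * Complex.exp P1 * (Complex.exp P2 * L * Complex.exp P3 * Γ2 * Γx / ΓY)
      = (q * Complex.exp T)/g * (L * Γ2 * Γx / ΓY) := by
    intro q g L Γ2 Γx ΓY P1 P2 P3 hsum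
    rw [← hsum, Complex.exp_add, Complex.exp_add]; ring
  have shapeR : ∀ (A B Cc D L Γ2 Γx Γl ΓY q : ℂ), Γl ≠ 0 → A+B+Cc+D = T →
      Complex.exp A * Complex.exp B * Complex.exp Cc * Γ2 *
        ((L*Γl) * Γx / (G1*G2*Γl*ΓY) * (q * Complex.exp D))
      = (q * Complex.exp T)/(G1*G2) * (L * Γ2 * Γx / ΓY) := by
    intro A B Cc D L Γ2 Γx Γl ΓY q hΓl hsum
    rw [← hsum, Complex.exp_add, Complex.exp_add, Complex.exp_add]
    field_simp
  rw [e1, e2, e3, e4, e5, e6, e7]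
  rw [show Complex.Gamma (lam + p + 2 + 2*(k:ℂ)) = Complex.Gamma ((lam+p+1+2*(k:ℂ))+1) by
      ring_nf,
    show Complex.Gamma (lam - μ + p + 1 + 2*(k:ℂ)) = Complex.Gamma ((lam+p+1+2*(k:ℂ))-μ) by
      ring_nf,
    show Complex.Gamma (lam + μ + p + 2 + 2*(k:ℂ)) = Complex.Gamma ((lam+p+1+2*(k:ℂ))+μ+1) by
      ring_nf,
    hrec]
  rw [shapeL _ _ _ _ _ _ _ _ _ (by rw [hT]; ring)]
  rw [shapeR _ _ _ _ _ _ _ _ _ _ hGlam (by rw [hT]; ring)]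


end Ober

open Ober Set in
theorem integral_struveH_oberhettinger_one (a : ℝ) (ha : 0 < a)
    (p b c lam μ : ℂ) (y : ℝ) (hy : 0 < y)
    (h1 : 0 < μ.re) (h2 : μ.re < (lam + p + 1).re) :
    ∫ x in Set.Ioi (0 : ℝ),
        (x : ℂ) ^ (μ - 1) *
          ((x + a + Real.sqrt (x ^ 2 + 2 * a * x) : ℝ) : ℂ) ^ (-lam) *
          struveH p b c
            ((y : ℂ) / ((x + a + Real.sqrt (x ^ 2 + 2 * a * x) : ℝ) : ℂ)) =
      (2 : ℂ) ^ (-μ - p) * (a : ℂ) ^ (μ - lam - p - 1) * (y : ℂ) ^ (p + 1) *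
        Complex.Gamma (2 * μ) *
        ∑' k : ℕ,
          Complex.Gamma (lam + p + 2 + 2 * k) * Complex.Gamma (lam - μ + p + 1 + 2 * k) /
              (Complex.Gamma ((k : ℂ) + 3 / 2) *
                Complex.Gamma ((k : ℂ) + p + (b + 2) / 2) *
                Complex.Gamma (lam + p + 1 + 2 * k) *
                Complex.Gamma (lam + μ + p + 2 + 2 * k)) *
            (-c * y ^ 2 / (4 * (a : ℂ) ^ 2)) ^ k := by
  classical
  set f : ℕ → ℝ → ℂ := fun k x =>
    (x:ℂ)^(μ-1) * ((x + a + Real.sqrt (x^2+2*a*x) : ℝ):ℂ)^(-lam) *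
      ((-c)^k / (Complex.Gamma ((k:ℂ)+3/2) * Complex.Gamma ((k:ℂ)+p+(b+2)/2)) *
        (((y:ℂ) / ((x + a + Real.sqrt (x^2+2*a*x) : ℝ):ℂ)) / 2)^(2*(k:ℂ)+p+1)) with hfdef
  -- Step 1: rewrite integrand as tsum
  have step1 : ∫ x in Ioi (0:ℝ),
      (x : ℂ) ^ (μ - 1) * ((x + a + Real.sqrt (x ^ 2 + 2 * a * x) : ℝ) : ℂ) ^ (-lam) *
        struveH p b c ((y : ℂ) / ((x + a + Real.sqrt (x ^ 2 + 2 * a * x) : ℝ) : ℂ))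
      = ∫ x in Ioi (0:ℝ), ∑' k : ℕ, f k x := by
    apply setIntegral_congr_fun measurableSet_Ioi
    intro x hx
    simp only [struveH, hfdef]
    rw [← tsum_mul_left]
  -- measurability
  have hUcont : Continuous (fun x : ℝ => x + a + Real.sqrt (x^2+2*a*x)) := by fun_prop
  have hmeas : ∀ k : ℕ, AEStronglyMeasurable (f k) (volume.restrict (Ioi 0)) := by
    intro k
    apply ContinuousOn.aestronglyMeasurable _ measurableSet_Ioi
    have c1 : ContinuousOn (fun x : ℝ => (x:ℂ)^(μ-1)) (Ioi 0) :=
      ContinuousOn.cpow Complex.continuous_ofReal.continuousOn continuousOn_const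
        (fun x hx => Complex.ofReal_mem_slitPlane.2 hx)
    have c2 : ContinuousOn (fun x : ℝ => ((x + a + Real.sqrt (x^2+2*a*x) : ℝ):ℂ)^(-lam))
        (Ioi 0) :=
      ContinuousOn.cpow (Complex.continuous_ofReal.comp hUcont).continuousOn continuousOn_const
        (fun x hx => Complex.ofReal_mem_slitPlane.2 (u_pos ha (le_of_lt hx)))
    have c3 : ContinuousOn
        (fun x : ℝ => (((y:ℂ) / ((x + a + Real.sqrt (x^2+2*a*x) : ℝ):ℂ)) / 2)^(2*(k:ℂ)+p+1))
        (Ioi 0) := by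
      apply ContinuousOn.cpow _ continuousOn_const
      · intro x hx
        have hu0 : 0 < x + a + Real.sqrt (x^2+2*a*x) := u_pos ha (le_of_lt hx)
        rw [show ((y:ℂ) / ((x + a + Real.sqrt (x^2+2*a*x) : ℝ):ℂ)) / 2
            = ((y/(x + a + Real.sqrt (x^2+2*a*x))/2 : ℝ):ℂ) by push_cast; ring]
        exact Complex.ofReal_mem_slitPlane.2 (by positivity)
      · apply ContinuousOn.div_const
        apply ContinuousOn.div continuousOn_const
          (Complex.continuous_ofReal.comp hUcont).continuousOn
        intro x hx
        have hu0 : 0 < x + a + Real.sqrt (x^2+2*a*x) := u_pos ha (le_of_lt hx)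
        show ((x + a + Real.sqrt (x^2+2*a*x) : ℝ):ℂ) ≠ 0
        exact_mod_cast hu0.ne'
    exact (c1.mul c2).mul (continuousOn_const.mul c3)
  -- domination
  set β : ℕ → ℝ := fun k => (y/2)^(p.re+1) *
      ((‖c‖*((y/2)^2/a^2))^k /
        (‖Complex.Gamma ((k:ℂ)+3/2)‖ * ‖Complex.Gamma ((k:ℂ)+p+(b+2)/2)‖)) with hβdef
  have hy2 : (0:ℝ) < y/2 := by linarith
  have hβnn : ∀ k, 0 ≤ β k := by
    intro k
    apply mul_nonneg (Real.rpow_nonneg hy2.le _)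
    apply div_nonneg (pow_nonneg (mul_nonneg (norm_nonneg c) (by positivity)) k)
      (mul_nonneg (norm_nonneg _) (norm_nonneg _))
  have hβsum : Summable β := by
    have hq : (0:ℝ) ≤ ‖c‖*((y/2)^2/a^2) := mul_nonneg (norm_nonneg c) (by positivity)
    have := (sum_ratio _ hq (p+(b+2)/2)).mul_left ((y/2)^(p.re+1))
    simpa [← add_assoc] using this
  have hFint : IntegrableOn
      (fun x : ℝ => x^(μ.re-1) * (x + a + Real.sqrt (x^2+2*a*x))^(-((lam+p+1).re)))
      (Ioi 0) := intF ha h1 h2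
  have hFlt : ∫⁻ x in Ioi (0:ℝ),
      ENNReal.ofReal (x^(μ.re-1) * (x + a + Real.sqrt (x^2+2*a*x))^(-((lam+p+1).re))) < ⊤ := by
    refine lt_of_le_of_lt (lintegral_mono fun x => ?_) hFint.2
    rw [← ofReal_norm, Real.norm_eq_abs]
    exact ENNReal.ofReal_le_ofReal (le_abs_self _)
  have hlint : ∑' k : ℕ, ∫⁻ x in Ioi (0:ℝ), ‖f k x‖₊ ≠ ⊤ := by
    have hstep : ∀ k : ℕ, ∫⁻ x in Ioi (0:ℝ), ‖f k x‖₊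
        ≤ ENNReal.ofReal (β k) * ∫⁻ x in Ioi (0:ℝ),
            ENNReal.ofReal (x^(μ.re-1) * (x + a + Real.sqrt (x^2+2*a*x))^(-((lam+p+1).re))) := by
      intro k
      rw [← lintegral_const_mul' _ _ ENNReal.ofReal_ne_top]
      apply lintegral_mono_ae
      rw [ae_restrict_iff' measurableSet_Ioi]
      apply ae_of_all
      intro x hx
      rw [← enorm_eq_nnnorm, ← ofReal_norm, ← ENNReal.ofReal_mul (hβnn k)]
      exact ENNReal.ofReal_le_ofReal (norm_bound a y ha hy p lam b c μ k hx)
    refine ne_top_of_le_ne_top ?_ (ENNReal.tsum_le_tsum hstep)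
    rw [ENNReal.tsum_mul_right, ← ENNReal.ofReal_tsum_of_nonneg hβnn hβsum]
    exact (ENNReal.mul_lt_top ENNReal.ofReal_lt_top hFlt).ne
  rw [step1, integral_tsum hmeas hlint, ← tsum_mul_left]
  apply tsum_congr
  intro k
  -- pointwise rearrangement of f k
  have hptw : ∀ x ∈ Ioi (0:ℝ), f k x
      = ((-c)^k / (Complex.Gamma ((k:ℂ)+3/2) * Complex.Gamma ((k:ℂ)+p+(b+2)/2))
          * ((y/2 : ℝ):ℂ)^(2*(k:ℂ)+p+1)) *
        ((x:ℂ)^(μ-1) * ((x + a + Real.sqrt (x^2+2*a*x) : ℝ):ℂ)^(-(lam+p+1+2*(k:ℂ)))) := by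
    intro x hx
    have hu0 : 0 < x + a + Real.sqrt (x^2+2*a*x) := u_pos ha (le_of_lt hx)
    have hune : ((x + a + Real.sqrt (x^2+2*a*x) : ℝ):ℂ) ≠ 0 := by exact_mod_cast hu0.ne'
    simp only [hfdef]
    rw [show ((y:ℂ) / ((x + a + Real.sqrt (x^2+2*a*x) : ℝ):ℂ)) / 2
        = ((y/2 : ℝ):ℂ) * (((x + a + Real.sqrt (x^2+2*a*x))⁻¹ : ℝ):ℂ) by push_cast; ring]
    rw [Complex.mul_cpow_ofReal_nonneg (by positivity) (by positivity),
      Complex.ofReal_inv, Complex.inv_cpow _ _ (arg_pos_ne_pi hu0), ← Complex.cpow_neg,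
      show -(lam+p+1+2*(k:ℂ)) = -lam + -(2*(k:ℂ)+p+1) by ring,
      Complex.cpow_add _ _ hune]
    ring
  have hre : μ.re < (lam+p+1+2*(k:ℂ)).re := by
    rw [Complex.add_re, show ((2:ℂ)*(k:ℂ)).re = 2*(k:ℝ) by
      rw [show (2:ℂ)*(k:ℂ) = ((2*k:ℕ):ℂ) by push_cast; ring, Complex.natCast_re]; push_cast; ring]
    have : (0:ℝ) ≤ 2*(k:ℝ) := by positivity
    linarith
  rw [setIntegral_congr_fun measurableSet_Ioi hptw, integral_const_mul,
    lemA a ha μ (lam+p+1+2*(k:ℂ)) h1 hre]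
  exact term_eq ha hy h1 h2 k
end

section
/- Let α, β be complex numbers with Re(α) > 0 and Re(β) > 0. Then ∫₀¹ x^{α-1} (1-x)^{2β-1} (1 - x/3)^{2α-1} (1 - x/4)^{β-1} dx = (2/3)^{2α} Γ(α) Γ(β) / Γ(α + β), where Γ denotes the complex Gamma function and all complex powers of positive reals are principal powers. -/
open MeasureTheory
open Set

private lemma log_im_zero {r : ℝ} (hr : 0 < r) : (Complex.log r).im = 0 := by
  rw [← Complex.ofReal_log hr.le]; simp

private lemma cpow_two_mul {r : ℝ} (hr : 0 < r) (w : ℂ) :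
    ((r ^ 2 : ℝ) : ℂ) ^ w = (r : ℂ) ^ (2 * w) := by
  have h2 : ((r ^ 2 : ℝ) : ℂ) = (r : ℂ) ^ (2 : ℂ) := by
    push_cast
    rw [show (2:ℂ) = ((2:ℕ):ℂ) by norm_num, Complex.cpow_natCast]
  rw [h2, ← Complex.cpow_mul] <;>
    simp [Complex.mul_im, log_im_zero hr, Real.pi_pos, Real.pi_pos.le, le_of_lt]

private lemma cpow_succ {r : ℝ} (hr : 0 < r) (w : ℂ) :
    (r : ℂ) ^ w * (r : ℂ) = (r : ℂ) ^ (w + 1) := by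
  rw [Complex.cpow_add _ _ (by exact_mod_cast hr.ne'), Complex.cpow_one]

private lemma mul_cpow {a b : ℝ} (ha : 0 ≤ a) (hb : 0 ≤ b) (w : ℂ) :
    ((a * b : ℝ) : ℂ) ^ w = (a : ℂ) ^ w * (b : ℂ) ^ w := by
  push_cast; exact Complex.mul_cpow_ofReal_nonneg ha hb w

/-- **Lavoie–Trottier integral formula.** For complex `α, β` with `Re α > 0` and `Re β > 0`,
`∫₀¹ x^(α-1) (1-x)^(2β-1) (1 - x/3)^(2α-1) (1 - x/4)^(β-1) dx = (2/3)^(2α) Γ(α) Γ(β) / Γ(α+β)`. -/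
theorem lavoie_trottier_integral (α β : ℂ) (hα : 0 < α.re) (hβ : 0 < β.re) :
    ∫ x in (0 : ℝ)..1,
        (x : ℂ) ^ (α - 1) * ((1 - x : ℝ) : ℂ) ^ (2 * β - 1) *
          ((1 - x / 3 : ℝ) : ℂ) ^ (2 * α - 1) * ((1 - x / 4 : ℝ) : ℂ) ^ (β - 1) =
      ((2 : ℂ) / 3) ^ (2 * α) * (Complex.Gamma α * Complex.Gamma β / Complex.Gamma (α + β)) := by
  set f : ℝ → ℝ := fun x => 9/4 * (x * (1 - x/3)^2) with hf_def
  set f' : ℝ → ℝ := fun x => 9/4 * ((1 - x/3) * (1 - x)) with hf'_def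
  set g : ℝ → ℂ := fun y => (y : ℂ) ^ (α - 1) * ((1 - y : ℝ) : ℂ) ^ (β - 1) with hg_def
  have hderivAt : ∀ x : ℝ, HasDerivAt f (f' x) x := by
    intro x
    have h0 : HasDerivAt (fun x : ℝ => 1 - x/3) (-(1/3)) x := by
      simpa using ((hasDerivAt_id x).div_const 3).const_sub 1
    have h1 := h0.pow 2
    have h2 := ((hasDerivAt_id x).mul h1).const_mul (9/4 : ℝ)
    refine h2.congr_deriv ?_
    simp [hf'_def]
    ring
  have hmono : StrictMonoOn f (Ioo (0:ℝ) 1) := by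
    apply strictMonoOn_of_deriv_pos (convex_Ioo 0 1)
    · exact (Continuous.continuousOn (by continuity))
    · intro x hx
      rw [interior_Ioo] at hx
      rw [(hderivAt x).deriv]
      obtain ⟨h0, h1⟩ := hx
      have : (0:ℝ) < 1 - x/3 := by linarith
      have : (0:ℝ) < 1 - x := by linarith
      simp only [hf'_def]
      positivity
  have himg : f '' Ioo (0:ℝ) 1 = Ioo (0:ℝ) 1 := by
    apply subset_antisymm
    · rintro y ⟨x, ⟨h0, h1⟩, rfl⟩
      constructor
      · have h3 : (0:ℝ) < 1 - x/3 := by linarith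
        simp only [hf_def]
        positivity
      · simp only [hf_def]; nlinarith [sq_nonneg (1-x)]
    · have hc : ContinuousOn f (Icc (0:ℝ) 1) := (Continuous.continuousOn (by continuity))
      have := intermediate_value_Ioo (zero_le_one) hc
      have e0 : f 0 = 0 := by norm_num [hf_def]
      have e1 : f 1 = 1 := by norm_num [hf_def]
      rwa [e0, e1] at this
  have hCoV := integral_image_eq_integral_abs_deriv_smul measurableSet_Ioo
    (fun x _ => (hderivAt x).hasDerivWithinAt) hmono.injOn g
  rw [himg] at hCoV
  -- Gamma side
  have hΓne : Complex.Gamma (α + β) ≠ 0 := by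
    apply Complex.Gamma_ne_zero
    intro m h
    have := congrArg Complex.re h
    simp [Complex.add_re] at this
    have hm : (0:ℝ) ≤ (m:ℝ) := Nat.cast_nonneg m
    nlinarith
  have hbeta : Complex.Gamma α * Complex.Gamma β / Complex.Gamma (α+β)
      = ∫ y in Ioo (0:ℝ) 1, g y := by
    rw [Complex.Gamma_mul_Gamma_eq_betaIntegral hα hβ, mul_div_cancel_left₀ _ hΓne,
      Complex.betaIntegral, intervalIntegral.integral_of_le zero_le_one,
      integral_Ioc_eq_integral_Ioo]
    apply setIntegral_congr_fun measurableSet_Ioo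
    intro y _
    simp only [hg_def]
    push_cast
    ring
  -- pointwise identity
  have hpt : ∀ x ∈ Ioo (0:ℝ) 1,
      (x : ℂ) ^ (α - 1) * ((1 - x : ℝ) : ℂ) ^ (2 * β - 1) *
        ((1 - x / 3 : ℝ) : ℂ) ^ (2 * α - 1) * ((1 - x / 4 : ℝ) : ℂ) ^ (β - 1)
      = ((4/9 : ℝ) : ℂ) ^ α * (|f' x| • g (f x)) := by
    intro x ⟨hx0, hx1⟩
    have h3 : (0:ℝ) < 1 - x/3 := by linarith
    have h4 : (0:ℝ) < 1 - x/4 := by linarith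
    have h1x : (0:ℝ) < 1 - x := by linarith
    have h94 : (0:ℝ) < 9/4 := by norm_num
    have hf'pos : 0 < f' x := by simp only [hf'_def]; positivity
    rw [abs_of_pos hf'pos]
    have hfx : (f x : ℝ) = 9/4 * (x * (1 - x/3)^2) := rfl
    have h1fx : (1 - f x : ℝ) = (1-x)^2 * (1 - x/4) := by simp only [hf_def]; ring
    have e1 : ((f x : ℝ) : ℂ) ^ (α - 1)
        = ((9/4:ℝ):ℂ)^(α-1) * ((x:ℂ)^(α-1) * ((1-x/3:ℝ):ℂ)^(2*(α-1))) := by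
      rw [hfx, mul_cpow h94.le (by positivity), mul_cpow hx0.le (by positivity),
        cpow_two_mul h3]
    have e2 : ((1 - f x : ℝ) : ℂ) ^ (β - 1)
        = ((1-x:ℝ):ℂ)^(2*(β-1)) * ((1-x/4:ℝ):ℂ)^(β-1) := by
      rw [h1fx, mul_cpow (by positivity) h4.le, cpow_two_mul h1x]
    have hK : ((4/9:ℝ):ℂ)^α * (((9/4:ℝ):ℂ)^(α-1) * ((9/4:ℝ):ℂ)) = 1 := by
      rw [cpow_succ h94, sub_add_cancel, ← mul_cpow (by norm_num) (by norm_num)]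
      norm_num
    have hB : ((1-x:ℝ):ℂ)^(2*(β-1)) * ((1-x:ℝ):ℂ) = ((1-x:ℝ):ℂ)^(2*β-1) := by
      rw [cpow_succ h1x, show 2*(β-1)+1 = 2*β-1 from by ring]
    have hC : ((1-x/3:ℝ):ℂ)^(2*(α-1)) * ((1-x/3:ℝ):ℂ) = ((1-x/3:ℝ):ℂ)^(2*α-1) := by
      rw [cpow_succ h3, show 2*(α-1)+1 = 2*α-1 from by ring]
    have hf'c : ((f' x : ℝ) : ℂ) = ((9/4:ℝ):ℂ) * (((1-x/3:ℝ):ℂ) * ((1-x:ℝ):ℂ)) := by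
      simp only [hf'_def]; push_cast; ring
    rw [Complex.real_smul, hg_def]
    simp only []
    rw [e1, e2, hf'c]
    calc (x : ℂ) ^ (α - 1) * ((1 - x : ℝ) : ℂ) ^ (2 * β - 1) *
          ((1 - x / 3 : ℝ) : ℂ) ^ (2 * α - 1) * ((1 - x / 4 : ℝ) : ℂ) ^ (β - 1)
        = 1 * ((x:ℂ)^(α-1) * ((1 - x : ℝ) : ℂ) ^ (2 * β - 1) *
            ((1 - x / 3 : ℝ) : ℂ) ^ (2 * α - 1) * ((1 - x / 4 : ℝ) : ℂ) ^ (β - 1)) := by ring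
      _ = (((4/9:ℝ):ℂ)^α * (((9/4:ℝ):ℂ)^(α-1) * ((9/4:ℝ):ℂ))) *
            ((x:ℂ)^(α-1) * (((1-x:ℝ):ℂ)^(2*(β-1)) * ((1-x:ℝ):ℂ)) *
             (((1-x/3:ℝ):ℂ)^(2*(α-1)) * ((1-x/3:ℝ):ℂ)) * ((1 - x / 4 : ℝ) : ℂ) ^ (β - 1)) := by
          rw [hK, hB, hC]
      _ = _ := by ring
  -- assemble
  rw [intervalIntegral.integral_of_le zero_le_one, integral_Ioc_eq_integral_Ioo,
    setIntegral_congr_fun measurableSet_Ioo hpt, integral_const_mul, ← hCoV, ← hbeta]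
  congr 1
  rw [show ((2:ℂ)/3) = (((2/3:ℝ)):ℂ) from by norm_num, ← cpow_two_mul (by norm_num) α]
  norm_num
end
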